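/- Let X be a continuous random variable with PDF f and CDF F supported on (l, r), let x₀ ∈ (l, r), and let g be a continuously differentiable function with g(x) > 0 and g'(x) > 0 for all x ∈ (l, x₀). Define P(x) = f(x) · g(x)/g'(x) and suppose P(x) → 0 as x → l. If x ↦ f(x)/g'(x) is monotone decreasing on (l, x₀), then F(x) ≥ P(x) for all x ∈ (l, x₀). -/

import Mathlib

open MeasureTheory Set Filter
/-- Theorem 2 (left-tail upper bound): for a RV supported on `(l, r)` with CDF `F`
and continuously differentiable PDF `f`, if `g > 0`, `g' > 0` on `(l, x₀)`,
`P x = f x * g x / g' x` tends to `0` as `x → l⁺`, and `f / g'` is decreasing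
on `(l, x₀)`, then `F x ≥ P x` on `(l, x₀)`. -/
theorem stmt_9 (μ : Measure ℝ) [IsProbabilityMeasure μ]
    (l r : EReal) (hlr : l < r)
    (F f g P : ℝ → ℝ)
    (hFdef : ∀ x, F x = (μ (Iic x)).toReal)
    (hsupp : μ {x : ℝ | ¬ (l < (x : EReal) ∧ (x : EReal) < r)} = 0)
    (hf : ∀ x : ℝ, l < (x : EReal) → (x : EReal) < r → HasDerivAt F (f x) x)
    (hfdiff : ∀ x : ℝ, l < (x : EReal) → (x : EReal) < r → DifferentiableAt ℝ f x)
    (hfC : ContinuousOn (deriv f) {x : ℝ | l < (x : EReal) ∧ (x : EReal) < r})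
    (x₀ : ℝ) (hx₀l : l < (x₀ : EReal)) (hx₀r : (x₀ : EReal) < r)
    (hgdiff : ∀ x : ℝ, l < (x : EReal) → x < x₀ → DifferentiableAt ℝ g x)
    (hgC : ContinuousOn (deriv g) {x : ℝ | l < (x : EReal) ∧ x < x₀})
    (hgpos : ∀ x : ℝ, l < (x : EReal) → x < x₀ → 0 < g x)
    (hg' : ∀ x : ℝ, l < (x : EReal) → x < x₀ → 0 < deriv g x)
    (hP : ∀ x, P x = f x * (g x / deriv g x))
    (hPlim : Tendsto P (comap (fun x : ℝ => (x : EReal)) (nhdsWithin l (Ioi l)))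
      (nhds 0))
    (hmono : AntitoneOn (fun x => f x / deriv g x)
      {x : ℝ | l < (x : EReal) ∧ x < x₀}) :
    ∀ x : ℝ, l < (x : EReal) → x < x₀ → F x ≥ P x := by
  intro x hlx hxx₀
  have hxr : (x : EReal) < r := lt_trans (by exact_mod_cast hxx₀) hx₀r
  -- F is monotone
  have Fmono : Monotone F := by
    intro u v huv
    rw [hFdef, hFdef]
    exact ENNReal.toReal_mono (measure_ne_top μ _) (measure_mono (Iic_subset_Iic.2 huv))
  -- f is nonneg on (l, r)
  have fnonneg : ∀ t : ℝ, l < (t : EReal) → (t : EReal) < r → 0 ≤ f t := by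
    intro t htl htr
    have hslope : Tendsto (slope F t) (nhdsWithin t (Ioi t)) (nhds (f t)) :=
      ((hasDerivAt_iff_tendsto_slope.1 (hf t htl htr)).mono_left
        (nhdsWithin_mono t fun u hu => ne_of_gt hu))
    refine ge_of_tendsto hslope ?_
    filter_upwards [self_mem_nhdsWithin] with u hu
    have : 0 < u - t := sub_pos.2 hu
    simp only [slope_def_field]
    rw [div_nonneg_iff]
    exact Or.inl ⟨sub_nonneg.2 (Fmono hu.le), this.le⟩
  -- key inequality for a ∈ (l, x)
  have key : ∀ a : ℝ, l < (a : EReal) → a < x → P x - P a ≤ F x := by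
    intro a hla hax
    have hax' : a ≤ x := hax.le
    have hsub : Icc a x ⊆ {t : ℝ | l < (t : EReal) ∧ t < x₀} := by
      intro t ht
      exact ⟨lt_of_lt_of_le hla (by exact_mod_cast ht.1), lt_of_le_of_lt ht.2 hxx₀⟩
    have hsubr : ∀ t ∈ Icc a x, l < (t : EReal) ∧ (t : EReal) < r := by
      intro t ht
      exact ⟨(hsub ht).1, lt_trans (by exact_mod_cast (hsub ht).2) hx₀r⟩
    -- FTC for F
    have hFint : ∫ t in a..x, f t = F x - F a := by
      apply intervalIntegral.integral_eq_sub_of_hasDerivAt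
      · intro t ht
        rw [uIcc_of_le hax'] at ht
        exact hf t (hsubr t ht).1 (hsubr t ht).2
      · apply ContinuousOn.intervalIntegrable
        rw [uIcc_of_le hax']
        intro t ht
        exact ((hfdiff t (hsubr t ht).1 (hsubr t ht).2).continuousAt).continuousWithinAt
    -- FTC for g
    have hgint : ∫ t in a..x, deriv g t = g x - g a := by
      apply intervalIntegral.integral_eq_sub_of_hasDerivAt
      · intro t ht
        rw [uIcc_of_le hax'] at ht
        exact ((hgdiff t (hsub ht).1 (hsub ht).2).hasDerivAt)
      · apply ContinuousOn.intervalIntegrable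
        rw [uIcc_of_le hax']
        exact hgC.mono hsub
    set c := f x / deriv g x with hc
    have hgint' : IntervalIntegrable (deriv g) volume a x := by
      apply ContinuousOn.intervalIntegrable
      rw [uIcc_of_le hax']
      exact hgC.mono hsub
    have hxmem : x ∈ {t : ℝ | l < (t : EReal) ∧ t < x₀} := ⟨hlx, hxx₀⟩
    have hcompare : ∫ t in a..x, c * deriv g t ≤ ∫ t in a..x, f t := by
      apply intervalIntegral.integral_mono_on hax'
      · exact hgint'.const_mul c
      · apply ContinuousOn.intervalIntegrable
        rw [uIcc_of_le hax']
        intro t ht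
        exact ((hfdiff t (hsubr t ht).1 (hsubr t ht).2).continuousAt).continuousWithinAt
      · intro t ht
        have htmem := hsub ht
        have h1 : c ≤ f t / deriv g t := hmono htmem hxmem ht.2
        have h2 : 0 < deriv g t := hg' t htmem.1 htmem.2
        calc c * deriv g t ≤ (f t / deriv g t) * deriv g t :=
              mul_le_mul_of_nonneg_right h1 h2.le
          _ = f t := div_mul_cancel₀ _ h2.ne'
    rw [intervalIntegral.integral_const_mul, hgint, hFint] at hcompare
    -- c * g x = P x
    have hgx' : 0 < deriv g x := hg' x hlx hxx₀
    have hPx : P x = c * g x := by rw [hP]; ring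
    have hamem : a ∈ {t : ℝ | l < (t : EReal) ∧ t < x₀} := ⟨hla, hax.trans hxx₀⟩
    have hga : 0 < g a := hgpos a hla (hax.trans hxx₀)
    have hca : c * g a ≤ P a := by
      rw [hP]
      have h1 : c ≤ f a / deriv g a := hmono hamem hxmem hax'
      calc c * g a ≤ (f a / deriv g a) * g a := mul_le_mul_of_nonneg_right h1 hga.le
        _ = f a * (g a / deriv g a) := by ring
    have hFa : 0 ≤ F a := by rw [hFdef]; exact ENNReal.toReal_nonneg
    nlinarith [hcompare]
  -- the filter
  set filt := comap (fun x : ℝ => (x : EReal)) (nhdsWithin l (Ioi l)) with hfilt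
  have hbasis : (nhdsWithin l (Ioi l)).HasBasis (l < ·) (Ioo l) :=
    nhdsGT_basis_of_exists_gt ⟨(x : EReal), hlx⟩
  have hNeBot : filt.NeBot := by
    rw [hfilt, (hbasis.comap _).neBot_iff]
    intro u hu
    obtain ⟨c, hc1, hc2⟩ := exists_between (lt_min hu hlx)
    have hct : c ≠ ⊤ := ne_top_of_lt (hc2.trans_le (min_le_right _ _) |>.trans_le le_top)
    have hcb : c ≠ ⊥ := ne_bot_of_gt hc1
    refine ⟨c.toReal, ?_⟩
    rw [mem_preimage, EReal.coe_toReal hct hcb]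
    exact ⟨hc1, hc2.trans_le (min_le_left _ _)⟩
  have hev : ∀ᶠ a in filt, P x - P a ≤ F x := by
    have h1 : (fun a : ℝ => (a : EReal)) ⁻¹' (Ioi l ∩ Iio (x : EReal)) ∈ filt :=
      preimage_mem_comap (inter_mem self_mem_nhdsWithin
        (mem_nhdsWithin_of_mem_nhds (isOpen_Iio.mem_nhds hlx)))
    filter_upwards [h1] with a ha
    refine key a ha.1 ?_
    have h2 : (a : EReal) < (x : EReal) := ha.2
    exact_mod_cast h2
  have hlim : Tendsto (fun a => P x - P a) filt (nhds (P x - 0)) :=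
    tendsto_const_nhds.sub hPlim
  have := le_of_tendsto hlim hev
  simpa using this
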